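/- arXiv:1404.1546 — 2 statements merged into one kernel-verified Lean document; each statement's English description precedes it below -/
import Mathlib

section
/- Let β ∈ (0,1), suppose f is absolutely continuous on [0,T] with f(T) = 0, g is continuous on [0,T], and I^{1-β} g is absolutely continuous on [0,T]. Then ∫₀ᵀ f(t) D^β_t g(t) dt = ∫₀ᵀ G(t) D^β_t F(t) dt, where F(t) = f(T-t) and G(t) = g(T-t). -/
open MeasureTheory intervalIntegral

/-- The Riemann–Liouville fractional integral
`I^α ψ(t) = (1/Γ(α)) ∫₀ᵗ (t-s)^(α-1) ψ(s) ds`. -/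
noncomputable def fracInt (α : ℝ) (ψ : ℝ → ℝ) (t : ℝ) : ℝ :=
  (1 / Real.Gamma α) * ∫ s in (0:ℝ)..t, (t - s) ^ (α - 1) * ψ s

/-- The Riemann–Liouville derivative `D^β ψ = d/dt (I^{1-β} ψ)`. -/
noncomputable def rlDeriv (β : ℝ) (ψ : ℝ → ℝ) (t : ℝ) : ℝ :=
  deriv (fun u => fracInt (1 - β) ψ u) t

open Set Filter Metric
open scoped Topology Interval



lemma ae_ftc (K : ℝ → ℝ) (hK : Integrable K (volume : Measure ℝ)) :
    ∀ᵐ t : ℝ, HasDerivAt (fun u => ∫ s in (0:ℝ)..u, K s) (K t) t := by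
  filter_upwards [IsUnifLocDoublingMeasure.ae_tendsto_average_norm_sub (volume : Measure ℝ)
    hK.locallyIntegrable 1] with t ht
  have hl : Tendsto (fun u : ℝ => |u - t|) (𝓝[≠] t) (𝓝[>] (0:ℝ)) := by
    apply tendsto_nhdsWithin_of_tendsto_nhds_of_eventually_within
    · have : Tendsto (fun u : ℝ => |u - t|) (𝓝 t) (𝓝 |t - t|) :=
        (continuous_abs.comp (continuous_id.sub continuous_const)).tendsto t
      simpa using this.mono_left nhdsWithin_le_nhds
    · filter_upwards [self_mem_nhdsWithin] with u hu
      exact abs_pos.2 (sub_ne_zero.2 hu)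
  have key := ht (fun _ : ℝ => t) (fun u => |u - t|) hl
    (by filter_upwards with u; simpa using mem_closedBall_self (by positivity))
  rw [hasDerivAt_iff_tendsto_slope]
  set H : ℝ → ℝ := fun u => ∫ s in (0:ℝ)..u, K s with hH
  have hbound : ∀ u : ℝ, u ≠ t →
      ‖slope H t u - K t‖ ≤ 2 * ⨍ y in closedBall t |u - t|, ‖K y - K t‖ := by
    intro u hu
    have hut : u - t ≠ 0 := sub_ne_zero.2 hu
    have hint : H u - H t = ∫ s in t..u, K s := by
      rw [hH]
      rw [← intervalIntegral.integral_interval_sub_left (hK.intervalIntegrable)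
        (hK.intervalIntegrable)]
    have h1 : ∫ s in t..u, (K s - K t) = (H u - H t) - (u - t) * K t := by
      rw [intervalIntegral.integral_sub hK.intervalIntegrable intervalIntegrable_const,
        intervalIntegral.integral_const, hint]
      simp [smul_eq_mul]
    have hslope : slope H t u - K t = (∫ s in t..u, (K s - K t)) / (u - t) := by
      rw [h1, slope_def_field]; field_simp
    rw [hslope]
    have h2 : ‖(∫ s in t..u, (K s - K t)) / (u - t)‖
        = ‖∫ s in t..u, (K s - K t)‖ / |u - t| := by
      rw [norm_div]; simp [Real.norm_eq_abs]
    rw [h2]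
    have h3 : ‖∫ s in t..u, (K s - K t)‖ ≤ ∫ s in Ι t u, ‖K s - K t‖ :=
      intervalIntegral.norm_integral_le_integral_norm_uIoc
    have hsub : Ι t u ⊆ closedBall t |u - t| := by
      intro x hx
      rcases le_total t u with h | h
      · rw [uIoc_of_le h] at hx
        rw [Real.closedBall_eq_Icc]
        constructor
        · have := hx.1.le; have : |u - t| = u - t := abs_of_nonneg (by linarith); linarith [hx.1.le]
        · have : |u - t| = u - t := abs_of_nonneg (by linarith); linarith [hx.2]
      · rw [uIoc_of_ge h] at hx
        rw [Real.closedBall_eq_Icc]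
        have : |u - t| = t - u := abs_of_nonpos (by linarith) |>.trans (by ring)
        constructor
        · linarith [hx.1.le]
        · linarith [hx.2]
    have hKint : IntegrableOn (fun s => ‖K s - K t‖) (closedBall t |u - t|) volume :=
      (hK.integrableOn.sub (integrableOn_const measure_closedBall_lt_top.ne)).norm
    have h4 : ∫ s in Ι t u, ‖K s - K t‖ ≤ ∫ s in closedBall t |u - t|, ‖K s - K t‖ :=
      setIntegral_mono_set hKint
        (Eventually.of_forall fun s => norm_nonneg _)
        (HasSubset.Subset.eventuallyLE hsub)
    have h5 : ∫ s in closedBall t |u - t|, ‖K s - K t‖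
        = (2 * |u - t|) * ⨍ y in closedBall t |u - t|, ‖K y - K t‖ := by
      rw [setAverage_eq, Real.volume_real_closedBall (abs_nonneg _)]
      rw [smul_eq_mul, ← mul_assoc, mul_inv_cancel₀ (by positivity), one_mul]
    calc ‖∫ s in t..u, (K s - K t)‖ / |u - t|
        ≤ (∫ s in closedBall t |u - t|, ‖K s - K t‖) / |u - t| := by
          exact (div_le_div_iff_of_pos_right (abs_pos.2 hut)).mpr (h3.trans h4)
      _ = 2 * ⨍ y in closedBall t |u - t|, ‖K y - K t‖ := by
          rw [h5]; field_simp
  have : Tendsto (fun u => slope H t u - K t) (𝓝[≠] t) (𝓝 0) := by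
    apply squeeze_zero_norm' ?_ (by simpa using key.const_mul 2)
    filter_upwards [self_mem_nhdsWithin] with u hu
    exact hbound u hu
  have := this.add (tendsto_const_nhds (x := K t))
  simpa using this


lemma kernel_intervalIntegrable2 {β : ℝ} (hβ1 : β < 1) (u t : ℝ) :
    IntervalIntegrable (fun s => (t - s) ^ (-β)) volume u t := by
  have h : IntervalIntegrable (fun x : ℝ => x ^ (-β)) volume (t - t) (t - u) :=
    intervalIntegrable_rpow' (by linarith)
  simpa using (h.comp_sub_left t).symm



lemma triangle_measurable' : MeasurableSet {q : ℝ × ℝ | q.2 ≤ q.1} :=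
  measurableSet_le measurable_snd measurable_fst

lemma kernel_integral2 {β : ℝ} (hβ1 : β < 1) {u t : ℝ} :
    ∫ s in u..t, (t - s) ^ (-β) = (t - u) ^ (1 - β) / (1 - β) := by
  have h := intervalIntegral.integral_comp_sub_left (a := u) (b := t)
    (fun x => x ^ (-β)) t
  simp only [sub_self] at h
  rw [h, integral_rpow (Or.inl (by linarith)),
    Real.zero_rpow (ne_of_gt (by linarith))]
  norm_num
  ring_nf

lemma kernel_integral2' {β : ℝ} (hβ1 : β < 1) {u t : ℝ} :
    ∫ s in u..t, (s - u) ^ (-β) = (t - u) ^ (1 - β) / (1 - β) := by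
  have h := intervalIntegral.integral_comp_sub_right (a := u) (b := t)
    (fun x => x ^ (-β)) u
  simp only [sub_self] at h
  rw [h, integral_rpow (Or.inl (by linarith)),
    Real.zero_rpow (ne_of_gt (by linarith))]
  norm_num
  ring_nf

lemma kernel_intervalIntegrable2' {β : ℝ} (hβ1 : β < 1) (u t : ℝ) :
    IntervalIntegrable (fun s => (s - u) ^ (-β)) volume u t := by
  have h : IntervalIntegrable (fun x : ℝ => x ^ (-β)) volume (u - u) (t - u) :=
    intervalIntegrable_rpow' (by linarith)
  simpa using h.comp_sub_right u

/-- integrand used in all triangle Fubinis, with singular kernel. -/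
noncomputable def triFun (β : ℝ) (φ ψ : ℝ → ℝ) : ℝ × ℝ → ℝ :=
  fun p => {q : ℝ × ℝ | q.2 ≤ q.1}.indicator
    (fun q => φ q.1 * ((q.1 - q.2) ^ (-β) * ψ q.2)) p

lemma triFun_aesm {T β : ℝ} {φ ψ : ℝ → ℝ}
    (hφ : AEStronglyMeasurable φ (volume.restrict (Ioc (0:ℝ) T)))
    (hψ : AEStronglyMeasurable ψ (volume.restrict (Ioc (0:ℝ) T))) :
    AEStronglyMeasurable (triFun β φ ψ)
      ((volume.restrict (Ioc (0:ℝ) T)).prod (volume.restrict (Ioc (0:ℝ) T))) := by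
  apply AEStronglyMeasurable.indicator _ triangle_measurable'
  exact hφ.comp_fst.mul ((Measurable.aestronglyMeasurable (f := fun q : ℝ × ℝ => (q.1 - q.2) ^ (-β)) (by fun_prop)).mul hψ.comp_snd)

/-- the `u`-slice at fixed `s` is an indicator of `Iic s`. -/
lemma triFun_slice_apply (β : ℝ) (φ ψ : ℝ → ℝ) (s u : ℝ) :
    triFun β φ ψ (s, u)
      = (Iic s).indicator (fun u => φ s * ((s - u) ^ (-β) * ψ u)) u := by
  simp [triFun, Set.indicator_apply]

lemma triFun_slice (β : ℝ) (φ ψ : ℝ → ℝ) (s : ℝ) :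
    (fun u => triFun β φ ψ (s, u))
      = (Iic s).indicator (fun u => φ s * ((s - u) ^ (-β) * ψ u)) := by
  funext u; simp [triFun, Set.indicator_apply]

lemma slice_integrable {T β : ℝ} (hβ1 : β < 1)
    {φ ψ : ℝ → ℝ}
    (hψ : AEStronglyMeasurable ψ (volume.restrict (Ioc (0:ℝ) T)))
    {M : ℝ} (hM : ∀ u, ‖ψ u‖ ≤ M) {s : ℝ} (hs : s ∈ Ioc (0:ℝ) T) :
    Integrable (fun u => triFun β φ ψ (s, u)) (volume.restrict (Ioc (0:ℝ) T)) := by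
  rw [triFun_slice, integrable_indicator_iff measurableSet_Iic]
  rw [IntegrableOn, Measure.restrict_restrict measurableSet_Iic]
  have hset : Iic s ∩ Ioc (0:ℝ) T = Ioc 0 s := by
    ext x
    simp only [mem_inter_iff, mem_Iic, mem_Ioc]
    constructor
    · rintro ⟨h1, h2, _⟩; exact ⟨h2, h1⟩
    · rintro ⟨h1, h2⟩; exact ⟨h2, h1, h2.trans hs.2⟩
  rw [hset]
  have hker : IntegrableOn (fun u => (s - u) ^ (-β)) (Ioc (0:ℝ) s) volume := by
    have h : IntervalIntegrable (fun x : ℝ => x ^ (-β)) volume (s - 0) (s - s) :=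
      (intervalIntegrable_rpow' (by linarith)).symm
    have := (h.comp_sub_left s)
    simp only [sub_sub_cancel] at this
    rw [intervalIntegrable_iff_integrableOn_Ioc_of_le hs.1.le] at this
    exact this
  have h1 : Integrable (fun u => ψ u * (s - u) ^ (-β)) (volume.restrict (Ioc (0:ℝ) s)) := by
    apply hker.bdd_mul (c := M)
    · exact hψ.mono_measure (Measure.restrict_mono (Ioc_subset_Ioc le_rfl hs.2) le_rfl)
    · exact Eventually.of_forall hM
  have h2 := h1.const_mul (φ s)
  have : (fun u => φ s * ((s - u) ^ (-β) * ψ u)) = fun u => φ s * (ψ u * (s - u) ^ (-β)) := by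
    funext u; ring
  rw [this]
  exact h2

/-- Version A : `φ` integrable, `ψ` bounded. -/
lemma triFun_integrable_left {T β : ℝ} (hβ0 : 0 < β) (hβ1 : β < 1)
    {φ ψ : ℝ → ℝ} (hφ : IntegrableOn φ (Ioc 0 T))
    (hψ : AEStronglyMeasurable ψ (volume.restrict (Ioc (0:ℝ) T)))
    {M : ℝ} (hM : ∀ u, ‖ψ u‖ ≤ M) :
    Integrable (triFun β φ ψ)
      ((volume.restrict (Ioc (0:ℝ) T)).prod (volume.restrict (Ioc (0:ℝ) T))) := by
  have hmeas := triFun_aesm (T := T) (β := β) hφ.aestronglyMeasurable hψ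
  rw [integrable_prod_iff hmeas]
  have hM0 : 0 ≤ M := le_trans (norm_nonneg _) (hM 0)
  constructor
  · filter_upwards [ae_restrict_mem measurableSet_Ioc] with s hs
    exact slice_integrable hβ1 hψ hM hs
  · -- bound s ↦ ∫ u ‖triFun (s,u)‖ by ‖φ s‖ * C
    set C := M * (T ^ (1 - β) / (1 - β)) with hC
    apply Integrable.mono' (g := fun s => ‖φ s‖ * C) (hφ.norm.mul_const C)
      hmeas.norm.integral_prod_right'
    filter_upwards [ae_restrict_mem measurableSet_Ioc] with s hs
    have hTs : (0:ℝ) ≤ s := hs.1.le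
    have hsT : s ≤ T := hs.2
    have hker : IntegrableOn (fun u => (s - u) ^ (-β)) (Ioc (0:ℝ) s) volume := by
      have h : IntervalIntegrable (fun x : ℝ => x ^ (-β)) volume (s - 0) (s - s) :=
        (intervalIntegrable_rpow' (by linarith)).symm
      have h2 := (h.comp_sub_left s)
      simp only [sub_sub_cancel] at h2
      rw [intervalIntegrable_iff_integrableOn_Ioc_of_le hTs] at h2
      exact h2
    have hset : Iic s ∩ Ioc (0:ℝ) T = Ioc 0 s := by
      ext x
      simp only [mem_inter_iff, mem_Iic, mem_Ioc]
      constructor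
      · rintro ⟨h1, h2, _⟩; exact ⟨h2, h1⟩
      · rintro ⟨h1, h2⟩; exact ⟨h2, h1, h2.trans hsT⟩
    have hnorm1 : ∫ u in Ioc (0:ℝ) T, ‖triFun β φ ψ (s, u)‖
        = ∫ u in Ioc (0:ℝ) s, ‖φ s * ((s - u) ^ (-β) * ψ u)‖ := by
      have : (fun u => ‖triFun β φ ψ (s, u)‖)
          = (Iic s).indicator (fun u => ‖φ s * ((s - u) ^ (-β) * ψ u)‖) := by
        funext u
        rw [triFun_slice_apply]
        by_cases h : u ∈ Iic s <;> simp [Set.indicator_apply, h]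
      rw [this, setIntegral_indicator measurableSet_Iic, Set.inter_comm, hset]
    have hint1 : IntegrableOn (fun u => ‖φ s * ((s - u) ^ (-β) * ψ u)‖) (Ioc (0:ℝ) s) volume := by
      have h0 := (slice_integrable (T := T) (φ := φ) hβ1 hψ hM hs).norm
      simp only [triFun_slice_apply] at h0
      have h1 : Integrable ((Iic s).indicator fun u => ‖φ s * ((s - u) ^ (-β) * ψ u)‖)
          (volume.restrict (Ioc (0:ℝ) T)) := by
        apply h0.congr
        apply Eventually.of_forall
        intro u
        by_cases h : u ∈ Iic s <;> simp [Set.indicator_apply, h]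
      rw [integrable_indicator_iff measurableSet_Iic, IntegrableOn,
        Measure.restrict_restrict measurableSet_Iic, hset] at h1
      exact h1
    have hint2 : IntegrableOn (fun u => ‖φ s‖ * M * (s - u) ^ (-β)) (Ioc (0:ℝ) s) volume :=
      hker.const_mul _
    have hbound : ∫ u in Ioc (0:ℝ) s, ‖φ s * ((s - u) ^ (-β) * ψ u)‖
        ≤ ∫ u in Ioc (0:ℝ) s, ‖φ s‖ * M * (s - u) ^ (-β) := by
      apply setIntegral_mono_on hint1 hint2 measurableSet_Ioc
      intro u hu
      have hpos : (0:ℝ) ≤ (s - u) ^ (-β) := Real.rpow_nonneg (by linarith [hu.2]) _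
      calc ‖φ s * ((s - u) ^ (-β) * ψ u)‖ = ‖φ s‖ * ((s - u) ^ (-β) * ‖ψ u‖) := by
            simp [Real.norm_eq_abs, abs_mul, abs_of_nonneg hpos]
        _ ≤ ‖φ s‖ * ((s - u) ^ (-β) * M) := by
            apply mul_le_mul_of_nonneg_left _ (norm_nonneg _)
            exact mul_le_mul_of_nonneg_left (hM u) hpos
        _ = ‖φ s‖ * M * (s - u) ^ (-β) := by ring
    have hval : ∫ u in Ioc (0:ℝ) s, ‖φ s‖ * M * (s - u) ^ (-β)
        = ‖φ s‖ * M * (s ^ (1 - β) / (1 - β)) := by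
      rw [← intervalIntegral.integral_of_le hTs, intervalIntegral.integral_const_mul,
        kernel_integral2 hβ1]
      simp
    have hrpow : s ^ (1 - β) ≤ T ^ (1 - β) :=
      Real.rpow_le_rpow hTs hsT (by linarith)
    have hfin : ‖φ s‖ * M * (s ^ (1 - β) / (1 - β)) ≤ ‖φ s‖ * C := by
      rw [hC, ← mul_assoc]
      have h1β : (0:ℝ) < 1 - β := by linarith
      gcongr
    calc ‖∫ u in Ioc (0:ℝ) T, ‖triFun β φ ψ (s, u)‖‖
        = ∫ u in Ioc (0:ℝ) T, ‖triFun β φ ψ (s, u)‖ := by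
          rw [Real.norm_eq_abs, abs_of_nonneg (integral_nonneg (fun u => norm_nonneg _))]
      _ = ∫ u in Ioc (0:ℝ) s, ‖φ s * ((s - u) ^ (-β) * ψ u)‖ := hnorm1
      _ ≤ ∫ u in Ioc (0:ℝ) s, ‖φ s‖ * M * (s - u) ^ (-β) := hbound
      _ = ‖φ s‖ * M * (s ^ (1 - β) / (1 - β)) := hval
      _ ≤ ‖φ s‖ * C := hfin

/-- the `s`-slice at fixed `u`. -/
lemma triFun_slice_apply' (β : ℝ) (φ ψ : ℝ → ℝ) (u s : ℝ) :
    triFun β φ ψ (s, u)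
      = (Ici u).indicator (fun s => φ s * ((s - u) ^ (-β) * ψ u)) s := by
  simp [triFun, Set.indicator_apply]

lemma slice_integrable' {T β : ℝ} (hβ1 : β < 1)
    {φ ψ : ℝ → ℝ}
    (hφ : AEStronglyMeasurable φ (volume.restrict (Ioc (0:ℝ) T)))
    {M : ℝ} (hM : ∀ s, ‖φ s‖ ≤ M) {u : ℝ} (hu : u ∈ Ioc (0:ℝ) T) :
    Integrable (fun s => triFun β φ ψ (s, u)) (volume.restrict (Ioc (0:ℝ) T)) := by
  have heq : (fun s => triFun β φ ψ (s, u))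
      = (Ici u).indicator (fun s => φ s * ((s - u) ^ (-β) * ψ u)) := by
    funext s; exact triFun_slice_apply' β φ ψ u s
  rw [heq, integrable_indicator_iff measurableSet_Ici]
  rw [IntegrableOn, Measure.restrict_restrict measurableSet_Ici]
  have hset : Ici u ∩ Ioc (0:ℝ) T = Icc u T := by
    ext x
    simp only [mem_inter_iff, mem_Ici, mem_Ioc, mem_Icc]
    constructor
    · rintro ⟨h1, _, h3⟩; exact ⟨h1, h3⟩
    · rintro ⟨h1, h2⟩; exact ⟨h1, lt_of_lt_of_le hu.1 h1, h2⟩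
  rw [hset]
  have hker : IntegrableOn (fun s => (s - u) ^ (-β)) (Icc u T) volume := by
    have h2 := kernel_intervalIntegrable2' hβ1 u T
    rw [intervalIntegrable_iff_integrableOn_Icc_of_le hu.2] at h2
    exact h2
  have h1 : Integrable (fun s => φ s * (s - u) ^ (-β)) (volume.restrict (Icc u T)) := by
    apply hker.bdd_mul _ (Eventually.of_forall hM)
    refine hφ.mono_measure (Measure.restrict_mono ?_ le_rfl)
    intro x hx
    exact ⟨lt_of_lt_of_le hu.1 hx.1, hx.2⟩
  have h2 := h1.mul_const (ψ u)
  have heq2 : (fun s => φ s * ((s - u) ^ (-β) * ψ u))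
      = fun s => φ s * (s - u) ^ (-β) * ψ u := by
    funext s; ring
  rw [heq2]
  exact h2

/-- Version B : `φ` bounded, `ψ` integrable. -/
lemma triFun_integrable_right {T β : ℝ} (hβ0 : 0 < β) (hβ1 : β < 1)
    {φ ψ : ℝ → ℝ}
    (hφ : AEStronglyMeasurable φ (volume.restrict (Ioc (0:ℝ) T)))
    {M : ℝ} (hM : ∀ s, ‖φ s‖ ≤ M)
    (hψ : IntegrableOn ψ (Ioc 0 T)) :
    Integrable (triFun β φ ψ)
      ((volume.restrict (Ioc (0:ℝ) T)).prod (volume.restrict (Ioc (0:ℝ) T))) := by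
  have hmeas := triFun_aesm (T := T) (β := β) hφ hψ.aestronglyMeasurable
  rw [integrable_prod_iff' hmeas]
  have hM0 : 0 ≤ M := le_trans (norm_nonneg _) (hM 0)
  constructor
  · filter_upwards [ae_restrict_mem measurableSet_Ioc] with u hu
    exact slice_integrable' hβ1 hφ hM hu
  · set C := M * (T ^ (1 - β) / (1 - β)) with hC
    apply Integrable.mono' (g := fun u => ‖ψ u‖ * C) (hψ.norm.mul_const C)
      hmeas.norm.prod_swap.integral_prod_right'
    filter_upwards [ae_restrict_mem measurableSet_Ioc] with u hu
    have huT : u ≤ T := hu.2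
    have hset : Ici u ∩ Ioc (0:ℝ) T = Icc u T := by
      ext x
      simp only [mem_inter_iff, mem_Ici, mem_Ioc, mem_Icc]
      constructor
      · rintro ⟨h1, _, h3⟩; exact ⟨h1, h3⟩
      · rintro ⟨h1, h2⟩; exact ⟨h1, lt_of_lt_of_le hu.1 h1, h2⟩
    have hker : IntegrableOn (fun s => (s - u) ^ (-β)) (Icc u T) volume := by
      have h2 := kernel_intervalIntegrable2' hβ1 u T
      rw [intervalIntegrable_iff_integrableOn_Icc_of_le huT] at h2
      exact h2
    have hnorm1 : ∫ s in Ioc (0:ℝ) T, ‖triFun β φ ψ (s, u)‖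
        = ∫ s in Icc u T, ‖φ s * ((s - u) ^ (-β) * ψ u)‖ := by
      have : (fun s => ‖triFun β φ ψ (s, u)‖)
          = (Ici u).indicator (fun s => ‖φ s * ((s - u) ^ (-β) * ψ u)‖) := by
        funext s
        rw [triFun_slice_apply']
        by_cases h : s ∈ Ici u <;> simp [Set.indicator_apply, h]
      rw [this, setIntegral_indicator measurableSet_Ici, Set.inter_comm, hset]
    have hint1 : IntegrableOn (fun s => ‖φ s * ((s - u) ^ (-β) * ψ u)‖) (Icc u T) volume := by
      have h0 := (slice_integrable' (T := T) (ψ := ψ) hβ1 hφ hM hu).norm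
      simp only [triFun_slice_apply'] at h0
      have h1 : Integrable ((Ici u).indicator fun s => ‖φ s * ((s - u) ^ (-β) * ψ u)‖)
          (volume.restrict (Ioc (0:ℝ) T)) := by
        apply h0.congr
        apply Eventually.of_forall
        intro s
        by_cases h : s ∈ Ici u <;> simp [Set.indicator_apply, h]
      rw [integrable_indicator_iff measurableSet_Ici, IntegrableOn,
        Measure.restrict_restrict measurableSet_Ici, hset] at h1
      exact h1
    have hint2 : IntegrableOn (fun s => M * ‖ψ u‖ * (s - u) ^ (-β)) (Icc u T) volume :=
      hker.const_mul _
    have hbound : ∫ s in Icc u T, ‖φ s * ((s - u) ^ (-β) * ψ u)‖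
        ≤ ∫ s in Icc u T, M * ‖ψ u‖ * (s - u) ^ (-β) := by
      apply setIntegral_mono_on hint1 hint2 measurableSet_Icc
      intro s hsm
      have hpos : (0:ℝ) ≤ (s - u) ^ (-β) := Real.rpow_nonneg (by linarith [hsm.1]) _
      calc ‖φ s * ((s - u) ^ (-β) * ψ u)‖ = ‖φ s‖ * ((s - u) ^ (-β) * ‖ψ u‖) := by
            simp [Real.norm_eq_abs, abs_mul, abs_of_nonneg hpos]
        _ ≤ M * ((s - u) ^ (-β) * ‖ψ u‖) := by
            apply mul_le_mul_of_nonneg_right (hM s)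
            positivity
        _ = M * ‖ψ u‖ * (s - u) ^ (-β) := by ring
    have hval : ∫ s in Icc u T, M * ‖ψ u‖ * (s - u) ^ (-β)
        = M * ‖ψ u‖ * ((T - u) ^ (1 - β) / (1 - β)) := by
      rw [integral_Icc_eq_integral_Ioc, ← intervalIntegral.integral_of_le huT,
        intervalIntegral.integral_const_mul, kernel_integral2' hβ1]
    have hrpow : (T - u) ^ (1 - β) ≤ T ^ (1 - β) :=
      Real.rpow_le_rpow (by linarith [hu.1]) (by linarith [hu.1]) (by linarith)
    have hfin : M * ‖ψ u‖ * ((T - u) ^ (1 - β) / (1 - β)) ≤ ‖ψ u‖ * C := by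
      rw [hC]
      have h1β : (0:ℝ) < 1 - β := by linarith
      calc M * ‖ψ u‖ * ((T - u) ^ (1 - β) / (1 - β))
          ≤ M * ‖ψ u‖ * (T ^ (1 - β) / (1 - β)) := by gcongr
        _ = ‖ψ u‖ * (M * (T ^ (1 - β) / (1 - β))) := by ring
    calc ‖∫ s in Ioc (0:ℝ) T, ‖triFun β φ ψ (s, u)‖‖
        = ∫ s in Ioc (0:ℝ) T, ‖triFun β φ ψ (s, u)‖ := by
          rw [Real.norm_eq_abs, abs_of_nonneg (integral_nonneg (fun s => norm_nonneg _))]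
      _ = ∫ s in Icc u T, ‖φ s * ((s - u) ^ (-β) * ψ u)‖ := hnorm1
      _ ≤ ∫ s in Icc u T, M * ‖ψ u‖ * (s - u) ^ (-β) := hbound
      _ = M * ‖ψ u‖ * ((T - u) ^ (1 - β) / (1 - β)) := hval
      _ ≤ ‖ψ u‖ * C := hfin


/-- Triangle Fubini swap. -/
lemma triangle_swap {T : ℝ} (hT : 0 ≤ T) (e : ℝ → ℝ → ℝ)
    (he : Integrable (fun p : ℝ × ℝ => {q : ℝ × ℝ | q.2 ≤ q.1}.indicator
      (fun q => e q.1 q.2) p)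
      ((volume.restrict (Ioc 0 T)).prod (volume.restrict (Ioc 0 T)))) :
    ∫ s in (0:ℝ)..T, (∫ u in (0:ℝ)..s, e s u) = ∫ u in (0:ℝ)..T, ∫ s in u..T, e s u := by
  have h1 : ∫ s in (0:ℝ)..T, (∫ u in (0:ℝ)..s, e s u)
      = ∫ s in Ioc (0:ℝ) T, ∫ u in Ioc (0:ℝ) T,
          {q : ℝ × ℝ | q.2 ≤ q.1}.indicator (fun q => e q.1 q.2) (s, u) := by
    rw [integral_of_le hT]
    apply setIntegral_congr_fun measurableSet_Ioc
    intro s hs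
    dsimp only
    have : ∫ u in Ioc (0:ℝ) T, {q : ℝ × ℝ | q.2 ≤ q.1}.indicator (fun q => e q.1 q.2) (s, u)
        = ∫ u in Ioc (0:ℝ) T, (Iic s).indicator (fun u => e s u) u := by
      apply setIntegral_congr_fun measurableSet_Ioc
      intro u _
      simp [Set.indicator_apply]
    rw [this, setIntegral_indicator measurableSet_Iic, Set.Ioc_inter_Iic,
      min_eq_right hs.2, integral_of_le hs.1.le]
  have h2 : ∫ u in (0:ℝ)..T, (∫ s in u..T, e s u)
      = ∫ u in Ioc (0:ℝ) T, ∫ s in Ioc (0:ℝ) T,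
          {q : ℝ × ℝ | q.2 ≤ q.1}.indicator (fun q => e q.1 q.2) (s, u) := by
    rw [integral_of_le hT]
    apply setIntegral_congr_fun measurableSet_Ioc
    intro u hu
    dsimp only
    have : ∫ s in Ioc (0:ℝ) T, {q : ℝ × ℝ | q.2 ≤ q.1}.indicator (fun q => e q.1 q.2) (s, u)
        = ∫ s in Ioc (0:ℝ) T, (Ici u).indicator (fun s => e s u) s := by
      apply setIntegral_congr_fun measurableSet_Ioc
      intro s _
      simp [Set.indicator_apply]
    rw [this, setIntegral_indicator measurableSet_Ici]
    have hset : Ioc (0:ℝ) T ∩ Ici u = Icc u T := by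
      ext x
      simp only [mem_inter_iff, mem_Ioc, mem_Ici, mem_Icc]
      constructor
      · rintro ⟨⟨_, h2⟩, h3⟩; exact ⟨h3, h2⟩
      · rintro ⟨h1, h2⟩; exact ⟨⟨lt_of_lt_of_le hu.1 h1, h2⟩, h1⟩
    rw [hset, integral_Icc_eq_integral_Ioc, integral_of_le hu.2]
  rw [h1, h2]
  exact integral_integral_swap he


/-- Fractional integration by parts: if `f` is absolutely continuous on `[0,T]` with
`f(T) = 0`, `g` is continuous on `[0,T]` and `I^{1-β} g` is absolutely continuous with
a.e. derivative `Dg` (so `D^β g = Dg`), then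
`∫₀ᵀ f(t) D^β g(t) dt = ∫₀ᵀ G(t) D^β F(t) dt` where `F(t) = f(T-t)`, `G(t) = g(T-t)`. -/
theorem frac_integration_by_parts (T β : ℝ) (hT : 0 < T) (hβ : β ∈ Set.Ioo (0:ℝ) 1)
    (f f' g Dg : ℝ → ℝ)
    (hf' : IntervalIntegrable f' volume 0 T)
    (hf : ∀ t ∈ Set.Icc (0:ℝ) T, f t = f 0 + ∫ s in (0:ℝ)..t, f' s)
    (hfT : f T = 0)
    (hg : ContinuousOn g (Set.Icc 0 T))
    (hDg : IntervalIntegrable Dg volume 0 T)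
    (hACg : ∀ t ∈ Set.Icc (0:ℝ) T, fracInt (1 - β) g t = ∫ s in (0:ℝ)..t, Dg s) :
    ∫ t in (0:ℝ)..T, f t * Dg t =
      ∫ t in (0:ℝ)..T, g (T - t) * rlDeriv β (fun s => f (T - s)) t := by
  obtain ⟨hβ0, hβ1⟩ := hβ
  have hβ1' : (0:ℝ) < 1 - β := by linarith
  set c : ℝ := 1 / Real.Gamma (1 - β) with hc
  have hexp : (1:ℝ) - β - 1 = -β := by ring
  -- globalized g
  obtain ⟨M, hMg⟩ := isCompact_Icc.exists_bound_of_continuousOn hg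
  set g₀ : ℝ → ℝ := (Icc (0:ℝ) T).indicator g with hg₀
  have hg₀b : ∀ u, ‖g₀ u‖ ≤ max M 0 := by
    intro u
    rw [hg₀]
    by_cases h : u ∈ Icc (0:ℝ) T
    · rw [indicator_of_mem h]; exact le_max_of_le_left (hMg u h)
    · rw [indicator_of_notMem h]; simp
  have hg₀m : AEStronglyMeasurable g₀ volume :=
    (aestronglyMeasurable_indicator_iff measurableSet_Icc).2
      (hg.aestronglyMeasurable measurableSet_Icc)
  have hg₀eq : ∀ u ∈ Icc (0:ℝ) T, g₀ u = g u := fun u hu => indicator_of_mem hu g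
  have hf'I : IntegrableOn f' (Ioc (0:ℝ) T) :=
    (intervalIntegrable_iff_integrableOn_Ioc_of_le hT.le).1 hf'
  have hDgI : IntegrableOn Dg (Ioc (0:ℝ) T) :=
    (intervalIntegrable_iff_integrableOn_Ioc_of_le hT.le).1 hDg
  -- the common value
  set A : ℝ := ∫ s in (0:ℝ)..T, ∫ u in (0:ℝ)..s, f' s * ((s - u) ^ (-β) * g₀ u) with hA
  -- f as integral of f' from the right
  have hfe : ∀ t ∈ Icc (0:ℝ) T, f t = -∫ s in t..T, f' s := by
    intro t ht
    have h1 := hf t ht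
    have h2 := hf T ⟨hT.le, le_rfl⟩
    rw [hfT] at h2
    have h3 : (∫ s in (0:ℝ)..T, f' s) - ∫ s in (0:ℝ)..t, f' s = ∫ s in t..T, f' s :=
      integral_interval_sub_left hf' (hf'.mono_set (by
        rw [uIcc_of_le ht.1, uIcc_of_le hT.le]; exact Icc_subset_Icc le_rfl ht.2))
    have h4 : f 0 = -∫ s in (0:ℝ)..T, f' s := by linarith
    rw [h1, h4]
    linarith
  -- LHS = -(c * A)
  have hLHS : ∫ t in (0:ℝ)..T, f t * Dg t = -(c * A) := by
    have swap1 : ∫ t in (0:ℝ)..T, (∫ s in t..T, f' s * Dg t)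
        = ∫ s in (0:ℝ)..T, ∫ u in (0:ℝ)..s, f' s * Dg u := by
      refine (triangle_swap hT.le (fun s u => f' s * Dg u) ?_).symm
      exact (hf'I.mul_prod hDgI).indicator triangle_measurable'
    calc ∫ t in (0:ℝ)..T, f t * Dg t
        = ∫ t in (0:ℝ)..T, -(∫ s in t..T, f' s * Dg t) := by
          apply integral_congr
          intro t ht
          dsimp only
          rw [uIcc_of_le hT.le] at ht
          rw [hfe t ht, intervalIntegral.integral_mul_const, neg_mul]
      _ = -∫ t in (0:ℝ)..T, (∫ s in t..T, f' s * Dg t) := intervalIntegral.integral_neg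
      _ = -∫ s in (0:ℝ)..T, ∫ u in (0:ℝ)..s, f' s * Dg u := by rw [swap1]
      _ = -∫ s in (0:ℝ)..T, f' s * ∫ u in (0:ℝ)..s, Dg u := by
          congr 1
          apply integral_congr
          intro s _
          dsimp only
          rw [intervalIntegral.integral_const_mul]
      _ = -∫ s in (0:ℝ)..T, f' s * (c * ∫ u in (0:ℝ)..s, (s - u) ^ (-β) * g₀ u) := by
          congr 1
          apply integral_congr
          intro s hs
          dsimp only
          rw [uIcc_of_le hT.le] at hs
          rw [← hACg s hs]
          congr 1
          show fracInt (1 - β) g s = c * ∫ u in (0:ℝ)..s, (s - u) ^ (-β) * g₀ u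
          rw [fracInt, ← hc, hexp]
          congr 1
          apply integral_congr
          intro u hu
          dsimp only
          rw [uIcc_of_le hs.1] at hu
          rw [hg₀eq u ⟨hu.1, hu.2.trans hs.2⟩]
      _ = -(c * A) := by
          rw [hA]
          congr 1
          rw [← intervalIntegral.integral_const_mul]
          apply integral_congr
          intro s _
          dsimp only
          have hin : ∫ u in (0:ℝ)..s, f' s * ((s - u) ^ (-β) * g₀ u)
              = f' s * ∫ u in (0:ℝ)..s, (s - u) ^ (-β) * g₀ u :=
            intervalIntegral.integral_const_mul _ _
          rw [hin]
          ring
  -- RHS = -(c * A)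
  have hRHS : ∫ t in (0:ℝ)..T, g (T - t) * rlDeriv β (fun s => f (T - s)) t = -(c * A) := by
    set F : ℝ → ℝ := fun s => f (T - s) with hF0
    set h : ℝ → ℝ := fun u => -f' (T - u) with hh0
    have hhI : IntervalIntegrable h volume 0 T := by
      have h1 := hf'.comp_sub_left T
      simp only [sub_zero, sub_self] at h1
      exact h1.symm.neg
    have hhIoc : IntegrableOn h (Ioc (0:ℝ) T) :=
      (intervalIntegrable_iff_integrableOn_Ioc_of_le hT.le).1 hhI
    have hF : ∀ s ∈ Icc (0:ℝ) T, F s = ∫ u in (0:ℝ)..s, h u := by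
      intro s hs
      have hTs : T - s ∈ Icc (0:ℝ) T := ⟨by linarith [hs.2], by linarith [hs.1]⟩
      have e1 : ∫ u in (0:ℝ)..s, h u = -∫ u in (0:ℝ)..s, f' (T - u) := by
        rw [hh0, intervalIntegral.integral_neg]
      have e2 : ∫ u in (0:ℝ)..s, f' (T - u) = ∫ v in (T - s)..(T - 0), f' v :=
        intervalIntegral.integral_comp_sub_left f' T
      have e3 : (∫ v in (0:ℝ)..T, f' v) - ∫ v in (0:ℝ)..(T - s), f' v
          = ∫ v in (T - s)..T, f' v :=
        integral_interval_sub_left hf' (hf'.mono_set (by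
          rw [uIcc_of_le hTs.1, uIcc_of_le hT.le]; exact Icc_subset_Icc le_rfl hTs.2))
      have e4 := hf T ⟨hT.le, le_rfl⟩
      have e5 := hf (T - s) hTs
      rw [hfT] at e4
      rw [hF0]
      dsimp only
      rw [e1, e2]
      simp only [sub_zero]
      linarith
    set K0 : ℝ → ℝ := fun t => ∫ u in (0:ℝ)..t, (t - u) ^ (-β) * h u with hK0
    -- identification of the B-type integrand with triFun
    have htriB_eq : ∀ t : ℝ, (fun p : ℝ × ℝ => {q : ℝ × ℝ | q.2 ≤ q.1}.indicator
        (fun q => (q.1 - q.2) ^ (-β) * h q.2) p) = triFun β (fun _ => 1) h := by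
      intro t
      funext p
      unfold triFun
      simp only [one_mul]
    -- E1 + E2 : fracInt F = ∫ K0 on [0,T]
    have hfracF : ∀ t ∈ Icc (0:ℝ) T, fracInt (1 - β) F t = c * ∫ s in (0:ℝ)..t, K0 s := by
      intro t ht
      have hhIoc_t : IntegrableOn h (Ioc (0:ℝ) t) :=
        hhIoc.mono_set (Ioc_subset_Ioc le_rfl ht.2)
      have hker_t : IntegrableOn (fun s => (t - s) ^ (-β)) (Ioc (0:ℝ) t) :=
        (intervalIntegrable_iff_integrableOn_Ioc_of_le ht.1).1
          (kernel_intervalIntegrable2 hβ1 0 t)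
      have E1 : ∫ s in (0:ℝ)..t, (t - s) ^ (-β) * F s
          = ∫ u in (0:ℝ)..t, h u * ((t - u) ^ (1 - β) / (1 - β)) := by
        calc ∫ s in (0:ℝ)..t, (t - s) ^ (-β) * F s
            = ∫ s in (0:ℝ)..t, ∫ u in (0:ℝ)..s, (t - s) ^ (-β) * h u := by
              apply integral_congr
              intro s hs
              dsimp only
              rw [uIcc_of_le ht.1] at hs
              rw [hF s ⟨hs.1, hs.2.trans ht.2⟩, intervalIntegral.integral_const_mul]
          _ = ∫ u in (0:ℝ)..t, ∫ s in u..t, (t - s) ^ (-β) * h u := by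
              apply triangle_swap ht.1 (fun s u => (t - s) ^ (-β) * h u)
              exact (hker_t.mul_prod hhIoc_t).indicator triangle_measurable'
          _ = ∫ u in (0:ℝ)..t, h u * ((t - u) ^ (1 - β) / (1 - β)) := by
              apply integral_congr
              intro u _
              dsimp only
              rw [intervalIntegral.integral_mul_const, kernel_integral2 hβ1]
              ring
      have E2 : ∫ s in (0:ℝ)..t, K0 s
          = ∫ u in (0:ℝ)..t, h u * ((t - u) ^ (1 - β) / (1 - β)) := by
        calc ∫ s in (0:ℝ)..t, K0 s
            = ∫ s in (0:ℝ)..t, ∫ u in (0:ℝ)..s, (s - u) ^ (-β) * h u := rfl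
          _ = ∫ u in (0:ℝ)..t, ∫ s in u..t, (s - u) ^ (-β) * h u := by
              apply triangle_swap ht.1 (fun s u => (s - u) ^ (-β) * h u)
              rw [htriB_eq t]
              exact triFun_integrable_right hβ0 hβ1 aestronglyMeasurable_const
                (M := 1) (fun s => by simp) (hhIoc_t)
          _ = ∫ u in (0:ℝ)..t, h u * ((t - u) ^ (1 - β) / (1 - β)) := by
              apply integral_congr
              intro u _
              dsimp only
              rw [intervalIntegral.integral_mul_const, kernel_integral2' hβ1]
              ring
      rw [E2, fracInt, ← hc]
      congr 1
      rw [← E1]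
      apply integral_congr
      intro s _
      dsimp only
      rw [hexp]
    -- integrability of K0
    have hK0I : IntegrableOn K0 (Ioc (0:ℝ) T) := by
      have htriB : Integrable (triFun β (fun _ => 1) h)
          ((volume.restrict (Ioc (0:ℝ) T)).prod (volume.restrict (Ioc (0:ℝ) T))) :=
        triFun_integrable_right hβ0 hβ1 aestronglyMeasurable_const
          (M := 1) (fun s => by simp) hhIoc
      have h1 := htriB.integral_prod_left
      apply h1.congr
      filter_upwards [ae_restrict_mem measurableSet_Ioc] with s hs
      have hslice : (fun u => triFun β (fun _ => 1) h (s, u))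
          = (Iic s).indicator (fun u => (s - u) ^ (-β) * h u) := by
        funext u
        simp [triFun, Set.indicator_apply]
      calc ∫ u in Ioc (0:ℝ) T, triFun β (fun _ => 1) h (s, u)
          = ∫ u in Ioc (0:ℝ) T, (Iic s).indicator (fun u => (s - u) ^ (-β) * h u) u := by
            rw [hslice]
        _ = ∫ u in Ioc (0:ℝ) s, (s - u) ^ (-β) * h u := by
            rw [setIntegral_indicator measurableSet_Iic, Set.Ioc_inter_Iic,
              min_eq_right hs.2]
        _ = K0 s := by rw [hK0, ← intervalIntegral.integral_of_le hs.1.le]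
    set Kt : ℝ → ℝ := (Ioc (0:ℝ) T).indicator K0 with hKt
    have hKtI : Integrable Kt volume := (integrable_indicator_iff measurableSet_Ioc).2 hK0I
    have hIKt : ∀ w ∈ Icc (0:ℝ) T, ∫ s in (0:ℝ)..w, Kt s = ∫ s in (0:ℝ)..w, K0 s := by
      intro w hw
      rw [integral_of_le hw.1, integral_of_le hw.1]
      apply setIntegral_congr_fun measurableSet_Ioc
      intro s hs
      exact indicator_of_mem (show s ∈ Ioc (0:ℝ) T from ⟨hs.1, hs.2.trans hw.2⟩) _
    -- a.e. identification of rlDeriv with c * K0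
    have hAE : ∀ᵐ t : ℝ, t ∈ Ioo (0:ℝ) T → rlDeriv β F t = c * K0 t := by
      filter_upwards [ae_ftc Kt hKtI] with t hd ht
      have hdF : HasDerivAt (fracInt (1 - β) F) (c * Kt t) t := by
        have h2 : HasDerivAt (fun w => c * ∫ s in (0:ℝ)..w, Kt s) (c * Kt t) t :=
          hd.const_mul c
        apply h2.congr_of_eventuallyEq
        filter_upwards [isOpen_Ioo.mem_nhds ht] with w hw
        rw [hfracF w ⟨hw.1.le, hw.2.le⟩, hIKt w ⟨hw.1.le, hw.2.le⟩]
      rw [rlDeriv, hdF.deriv, hKt,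
        indicator_of_mem (show t ∈ Ioc (0:ℝ) T from ⟨ht.1, ht.2.le⟩)]
    -- value of K0 (T - t)
    have hK0T : ∀ t ∈ Icc (0:ℝ) T, K0 (T - t) = -∫ v in t..T, (v - t) ^ (-β) * f' v := by
      intro t ht
      have e1 := intervalIntegral.integral_comp_sub_left
        (a := (0:ℝ)) (b := T - t) (fun v => (v - t) ^ (-β) * h (T - v)) T
      simp only [sub_zero, sub_sub_cancel] at e1
      have e2 : K0 (T - t) = ∫ v in t..T, (v - t) ^ (-β) * h (T - v) := by
        rw [hK0, ← e1]
        apply integral_congr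
        intro u _
        dsimp only
        ring_nf
      rw [e2, ← intervalIntegral.integral_neg]
      apply integral_congr
      intro v _
      dsimp only
      rw [hh0]
      simp only [sub_sub_cancel]
      ring
    have hneT : ∀ᵐ t : ℝ, t ≠ T := by
      have h0 : {t : ℝ | ¬ t ≠ T} = {T} := by ext x; simp
      rw [ae_iff, h0]
      exact measure_singleton T
    calc ∫ t in (0:ℝ)..T, g (T - t) * rlDeriv β F t
        = ∫ t in (0:ℝ)..T, g₀ (T - t) * (c * K0 t) := by
          apply intervalIntegral.integral_congr_ae
          filter_upwards [hAE, hneT] with t h1 h2 hmem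
          rw [uIoc_of_le hT.le] at hmem
          have htoo : t ∈ Ioo (0:ℝ) T := ⟨hmem.1, lt_of_le_of_ne hmem.2 h2⟩
          rw [h1 htoo, hg₀eq (T - t) ⟨by linarith [hmem.2], by linarith [hmem.1]⟩]
      _ = ∫ t in (0:ℝ)..T, g₀ t * (c * K0 (T - t)) := by
          have e := intervalIntegral.integral_comp_sub_left
            (a := (0:ℝ)) (b := T) (fun t => g₀ t * (c * K0 (T - t))) T
          simp only [sub_zero, sub_self] at e
          rw [← e]
          apply integral_congr
          intro t _
          dsimp only
          rw [sub_sub_cancel]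
      _ = ∫ t in (0:ℝ)..T, -(c * ∫ v in t..T, f' v * ((v - t) ^ (-β) * g₀ t)) := by
          apply integral_congr
          intro t htm
          dsimp only
          rw [uIcc_of_le hT.le] at htm
          rw [hK0T t htm]
          have e2 : ∫ v in t..T, f' v * ((v - t) ^ (-β) * g₀ t)
              = (∫ v in t..T, (v - t) ^ (-β) * f' v) * g₀ t := by
            rw [← intervalIntegral.integral_mul_const]
            apply integral_congr
            intro v _
            dsimp only
            ring
          rw [e2]
          ring
      _ = -(c * ∫ t in (0:ℝ)..T, ∫ v in t..T, f' v * ((v - t) ^ (-β) * g₀ t)) := by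
          rw [intervalIntegral.integral_neg, intervalIntegral.integral_const_mul]
      _ = -(c * A) := by
          rw [hA]
          congr 2
          refine (triangle_swap hT.le (fun s u => f' s * ((s - u) ^ (-β) * g₀ u)) ?_).symm
          exact triFun_integrable_left hβ0 hβ1 hf'I hg₀m.restrict hg₀b
  rw [hLHS, hRHS]
end

section
/- Fractional Gronwall lemma: Suppose b > 0, β ∈ (0,1), a(t) is a nonnegative nondecreasing locally integrable function on [0,T), and η(t) is nonnegative locally integrable on [0,T) satisfying η(t) ≤ a(t) + b ∫₀ᵗ (t-s)^{β-1} η(s) ds for all t < T. Then η(t) ≤ a(t) E_β(b Γ(β) t^β), where E_β is the Mittag-Leffler function. -/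
open MeasureTheory intervalIntegral

section FracGronwallAux

open Set ENNReal

private lemma fg_gamma_lb {x A : ℝ} (hx : 0 ≤ x) (hA : 0 < A) :
    Real.exp (-(A+1)) * A ^ x ≤ Real.Gamma (x+1) := by
  rw [Real.Gamma_eq_integral (by linarith : (0:ℝ) < x+1)]
  have hint := Real.GammaIntegral_convergent (by linarith : (0:ℝ) < x+1)
  simp only [add_sub_cancel_right] at hint ⊢
  have hsub : Ioc A (A+1) ⊆ Ioi (0:ℝ) := fun u hu => hA.trans hu.1
  have h1 : Real.exp (-(A+1)) * A ^ x * (volume (Ioc A (A+1))).toReal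
      ≤ ∫ u in Ioc A (A+1), Real.exp (-u) * u ^ x := by
    apply setIntegral_ge_of_const_le_real measurableSet_Ioc (by simp)
    · intro u hu
      exact mul_le_mul (by simpa using Real.exp_le_exp.2 (neg_le_neg hu.2))
        (Real.rpow_le_rpow hA.le hu.1.le hx) (Real.rpow_nonneg hA.le x)
        (Real.exp_pos _).le
    · exact hint.mono_set hsub
  have h2 : (∫ u in Ioc A (A+1), Real.exp (-u) * u ^ x)
      ≤ ∫ u in Ioi 0, Real.exp (-u) * u ^ x := by
    apply setIntegral_mono_set hint
    · filter_upwards [self_mem_ae_restrict (measurableSet_Ioi : MeasurableSet (Ioi (0:ℝ)))]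
        with u hu
      exact mul_nonneg (Real.exp_pos _).le (Real.rpow_nonneg (le_of_lt hu) x)
    · exact hsub.eventuallyLE
  calc Real.exp (-(A+1)) * A ^ x
      = Real.exp (-(A+1)) * A ^ x * (volume (Ioc A (A+1))).toReal := by
        simp [Real.volume_Ioc]
    _ ≤ _ := h1.trans h2

private lemma fg_ml_term_le {β z : ℝ} (hβ : 0 < β) (hz : 0 ≤ z) (k : ℕ) :
    z ^ k / Real.Gamma (β * k + 1)
      ≤ Real.exp ((z+1) ^ β⁻¹ + 1) * (z / (z+1)) ^ k := by
  set A : ℝ := (z+1) ^ β⁻¹ with hAdef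
  have hz1 : (0:ℝ) < z + 1 := by linarith
  have hA : 0 < A := Real.rpow_pos_of_pos hz1 _
  have hAβ : A ^ (β * (k:ℝ)) = (z+1) ^ k := by
    rw [hAdef, ← Real.rpow_mul hz1.le, show β⁻¹ * (β*(k:ℝ)) = (k:ℝ) by field_simp]
    exact Real.rpow_natCast _ k
  have hgb := fg_gamma_lb (x := β * k) (by positivity) hA
  have hΓpos : 0 < Real.Gamma (β * k + 1) := Real.Gamma_pos_of_pos (by positivity)
  rw [div_le_iff₀ hΓpos]
  calc z ^ k = Real.exp (A + 1) * (z / (z+1)) ^ k * (Real.exp (-(A+1)) * (z+1)^k) := by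
        rw [div_pow]
        have h1 : Real.exp (A+1) * Real.exp (-(A+1)) = 1 := by
          rw [← Real.exp_add, show A+1+-(A+1) = 0 by ring, Real.exp_zero]
        have h2 : Real.exp (A + 1) * (z ^ k / (z + 1) ^ k) * (Real.exp (-(A + 1)) * (z + 1) ^ k)
            = (Real.exp (A+1) * Real.exp (-(A+1))) * (z^k / (z+1)^k * (z+1)^k) := by ring
        rw [h2, h1, one_mul, div_mul_cancel₀ _ (pow_ne_zero k hz1.ne')]
    _ ≤ Real.exp (A + 1) * (z / (z+1)) ^ k * Real.Gamma (β * k + 1) := by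
        apply mul_le_mul_of_nonneg_left _ (by positivity)
        rw [← hAβ]; exact hgb

private lemma fg_ml_summable {β z : ℝ} (hβ : 0 < β) (hz : 0 ≤ z) :
    Summable (fun k : ℕ => z ^ k / Real.Gamma (β * k + 1)) := by
  have hz1 : (0:ℝ) < z + 1 := by linarith
  refine Summable.of_nonneg_of_le (fun k => ?_) (fg_ml_term_le hβ hz) ?_
  · exact div_nonneg (pow_nonneg hz k) (Real.Gamma_pos_of_pos (by positivity)).le
  · exact (summable_geometric_of_lt_one (by positivity)
      ((div_lt_one hz1).2 (by linarith))).mul_left _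

private lemma fg_ml_mul_tendsto {β z : ℝ} (hβ : 0 < β) (hz : 0 ≤ z) :
    Filter.Tendsto (fun n : ℕ => (n:ℝ) * (z ^ n / Real.Gamma (β * n + 1)))
      Filter.atTop (nhds 0) := by
  have hz1 : (0:ℝ) < z + 1 := by linarith
  set r : ℝ := z / (z+1) with hr
  have hr1 : ‖r‖ < 1 := by
    rw [Real.norm_eq_abs, abs_of_nonneg (by positivity)]
    exact (div_lt_one hz1).2 (by linarith)
  have hg : Filter.Tendsto (fun n : ℕ => Real.exp ((z+1) ^ β⁻¹ + 1) * ((n:ℝ) * r ^ n))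
      Filter.atTop (nhds 0) := by
    have := (summable_pow_mul_geometric_of_norm_lt_one 1 hr1).tendsto_atTop_zero
    simp only [pow_one] at this
    simpa using this.const_mul (Real.exp ((z+1) ^ β⁻¹ + 1))
  refine squeeze_zero (fun n => by positivity) (fun n => ?_) hg
  have := mul_le_mul_of_nonneg_left (fg_ml_term_le hβ hz n) (Nat.cast_nonneg (α := ℝ) n)
  calc (n:ℝ) * (z ^ n / Real.Gamma (β * n + 1))
      ≤ (n:ℝ) * (Real.exp ((z+1) ^ β⁻¹ + 1) * r ^ n) := this
    _ = Real.exp ((z+1) ^ β⁻¹ + 1) * ((n:ℝ) * r ^ n) := by ring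

private lemma fg_rbeta01_integral {p q : ℝ} (hp : 0 < p) (hq : 0 < q) :
    ∫ x in (0:ℝ)..1, x ^ (p-1) * (1-x) ^ (q-1)
      = Real.Gamma p * Real.Gamma q / Real.Gamma (p+q) := by
  have h := Complex.Gamma_mul_Gamma_eq_betaIntegral
    (s := (p:ℂ)) (t := (q:ℂ)) (by simpa using hp) (by simpa using hq)
  have hcongr : Complex.betaIntegral (p:ℂ) (q:ℂ)
      = ((∫ x in (0:ℝ)..1, x ^ (p-1) * (1-x) ^ (q-1) : ℝ) : ℂ) := by
    rw [Complex.betaIntegral, ← intervalIntegral.integral_ofReal]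
    refine intervalIntegral.integral_congr fun x hx => ?_
    rw [Set.uIcc_of_le (by norm_num : (0:ℝ) ≤ 1)] at hx
    push_cast
    rw [Complex.ofReal_cpow hx.1 (p-1),
      Complex.ofReal_cpow (by linarith [hx.2] : (0:ℝ) ≤ 1 - x) (q-1)]
    push_cast
    ring
  rw [hcongr] at h
  have : ((Real.Gamma p * Real.Gamma q : ℝ) : ℂ)
      = ((Real.Gamma (p+q) * ∫ x in (0:ℝ)..1, x ^ (p-1) * (1-x) ^ (q-1) : ℝ) : ℂ) := by
    push_cast
    rw [← Complex.Gamma_ofReal, ← Complex.Gamma_ofReal, ← Complex.Gamma_ofReal]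
    push_cast at h ⊢
    exact h
  have h2 : Real.Gamma p * Real.Gamma q
      = Real.Gamma (p+q) * ∫ x in (0:ℝ)..1, x ^ (p-1) * (1-x) ^ (q-1) := by
    exact_mod_cast this
  field_simp [(Real.Gamma_pos_of_pos (show (0:ℝ) < p + q by linarith)).ne']
  linarith [h2]

private lemma fg_rbeta_kernel_integrable {p q u t : ℝ} (hp : 0 < p) (hq : 0 < q) (hut : u < t) :
    IntervalIntegrable (fun s => (t-s)^(p-1) * (s-u)^(q-1)) volume u t := by
  set m : ℝ := (u + t) / 2 with hm
  have hum : u < m := by rw [hm]; linarith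
  have hmt : m < t := by rw [hm]; linarith
  have h1 : IntervalIntegrable (fun s => (t-s)^(p-1) * (s-u)^(q-1)) volume u m := by
    have hbase : IntervalIntegrable (fun s : ℝ => (s-u)^(q-1)) volume u m := by
      have := (intervalIntegral.intervalIntegrable_rpow' (a := 0) (b := m - u)
        (r := q-1) (by linarith)).comp_sub_right u
      simpa using this
    refine hbase.continuousOn_mul ?_
    rw [Set.uIcc_of_le hum.le]
    apply ContinuousOn.rpow_const (by fun_prop)
    intro x hx
    left
    simp only [mem_Icc] at hx
    have : x < t := lt_of_le_of_lt hx.2 hmt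
    exact sub_ne_zero_of_ne (by linarith)
  have h2 : IntervalIntegrable (fun s => (t-s)^(p-1) * (s-u)^(q-1)) volume m t := by
    have hbase : IntervalIntegrable (fun s : ℝ => (t-s)^(p-1)) volume m t := by
      have := (intervalIntegral.intervalIntegrable_rpow' (a := t - m) (b := 0)
        (r := p-1) (by linarith)).comp_sub_left t
      simpa using this
    have hcont : ContinuousOn (fun s : ℝ => (s-u)^(q-1)) (Set.uIcc m t) := by
      rw [Set.uIcc_of_le hmt.le]
      apply ContinuousOn.rpow_const (by fun_prop)
      intro x hx
      left
      simp only [mem_Icc] at hx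
      exact sub_ne_zero_of_ne (by rintro rfl; linarith [hx.1])
    have h := hbase.continuousOn_mul hcont
    apply IntervalIntegrable.congr ?_ h
    exact fun s _ => mul_comm _ _
  exact h1.trans h2

private lemma fg_rbeta_integral {p q u t : ℝ} (hp : 0 < p) (hq : 0 < q) (hut : u < t) :
    (∫ s in u..t, (t-s)^(p-1) * (s-u)^(q-1))
      = Real.Gamma p * Real.Gamma q / Real.Gamma (p+q) * (t-u)^(p+q-1) := by
  set c : ℝ := t - u with hcdef
  have hc : 0 < c := by rw [hcdef]; linarith
  have hsub := intervalIntegral.integral_comp_mul_add (a := 0) (b := 1)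
    (f := fun s => (t-s)^(p-1)*(s-u)^(q-1)) hc.ne' u
  have hend : c * 0 + u = u := by ring
  have hend2 : c * 1 + u = t := by rw [hcdef]; ring
  rw [hend, hend2] at hsub
  have hLHS : (∫ x in (0:ℝ)..1, (t - (c * x + u))^(p-1) * ((c * x + u) - u)^(q-1))
      = c^(p-1) * c^(q-1) * ∫ x in (0:ℝ)..1, x ^ (q-1) * (1-x) ^ (p-1) := by
    rw [← intervalIntegral.integral_const_mul]
    refine intervalIntegral.integral_congr fun x hx => ?_
    rw [Set.uIcc_of_le (by norm_num : (0:ℝ) ≤ 1)] at hx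
    have h1 : t - (c * x + u) = c * (1 - x) := by rw [hcdef]; ring
    have h2 : (c * x + u) - u = c * x := by ring
    rw [h1, h2, Real.mul_rpow hc.le (by linarith [hx.2]), Real.mul_rpow hc.le hx.1]
    ring
  rw [hLHS, fg_rbeta01_integral hq hp] at hsub
  have hIeq : (∫ s in u..t, (t-s)^(p-1) * (s-u)^(q-1))
      = c * (c^(p-1) * c^(q-1) * (Real.Gamma q * Real.Gamma p / Real.Gamma (q+p))) := by
    rw [hsub, smul_eq_mul, ← mul_assoc, mul_inv_cancel₀ hc.ne', one_mul]
  rw [hIeq]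
  have hexp : c * (c^(p-1) * c^(q-1)) = c^(p+q-1) := by
    rw [show p+q-1 = (p-1)+((q-1)+1) by ring, Real.rpow_add hc, Real.rpow_add hc,
      Real.rpow_one]
    ring
  calc c * (c^(p-1) * c^(q-1) * (Real.Gamma q * Real.Gamma p / Real.Gamma (q+p)))
      = (c * (c^(p-1) * c^(q-1))) * (Real.Gamma q * Real.Gamma p / Real.Gamma (q+p)) := by ring
    _ = Real.Gamma p * Real.Gamma q / Real.Gamma (p+q) * c^(p+q-1) := by
        rw [hexp, add_comm q p]; ring

private lemma fg_kernel_integrable {γ t : ℝ} (hγ : 0 < γ) :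
    IntervalIntegrable (fun s : ℝ => (t-s)^(γ-1)) volume 0 t := by
  have := (intervalIntegral.intervalIntegrable_rpow' (a := t) (b := 0)
    (r := γ-1) (by linarith)).comp_sub_left t
  simpa using this

private lemma fg_kernel_integral {γ t : ℝ} (hγ : 0 < γ) :
    (∫ s in (0:ℝ)..t, (t-s)^(γ-1)) = t^γ / γ := by
  rw [intervalIntegral.integral_comp_sub_left (fun x => x ^ (γ-1)) t]
  simp only [sub_self, sub_zero]
  rw [integral_rpow (Or.inl (by linarith))]
  rw [Real.zero_rpow (by linarith : γ - 1 + 1 ≠ 0)]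
  rw [show γ - 1 + 1 = γ by ring]
  simp

private lemma fg_key {T β b t γ : ℝ} (hβ0 : 0 < β) (hb : 0 < b)
    (ht0 : 0 < t) (htT : t < T) (hγ : 0 < γ)
    (a η η' : ℝ → ℝ) (hη'meas : Measurable η')
    (hη'ae : η =ᵐ[volume.restrict (Set.Ioc 0 t)] η')
    (ha0 : ∀ s, 0 ≤ s → s < T → 0 ≤ a s)
    (hamono : ∀ s u, 0 ≤ s → s ≤ u → u < T → a s ≤ a u)
    (haint : IntegrableOn a (Set.Ioc 0 t) volume)
    (hη0 : ∀ s, 0 ≤ s → s < T → 0 ≤ η s)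
    (hineq : ∀ s, 0 ≤ s → s < T → η s ≤ a s + b * ∫ u in (0:ℝ)..s, (s-u)^(β-1) * η u) :
    (∫⁻ s in Set.Ioc 0 t, ENNReal.ofReal ((t-s)^(γ-1) * η s))
      ≤ ENNReal.ofReal (a t * (t^γ/γ))
        + ENNReal.ofReal (b * (Real.Gamma γ * Real.Gamma β / Real.Gamma (γ+β)))
          * ∫⁻ u in Set.Ioc 0 t, ENNReal.ofReal ((t-u)^(γ+β-1) * η u) := by
  have hΓβ : 0 < Real.Gamma β := Real.Gamma_pos_of_pos hβ0
  have hΓγ : 0 < Real.Gamma γ := Real.Gamma_pos_of_pos hγ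
  have hΓγβ : 0 < Real.Gamma (γ+β) := Real.Gamma_pos_of_pos (by linarith)
  set Bc : ℝ := Real.Gamma γ * Real.Gamma β / Real.Gamma (γ+β) with hBc
  have hBc0 : 0 ≤ Bc := by positivity
  -- the product kernel
  set G : ℝ → ℝ → ℝ≥0∞ := fun s u =>
    if 0 < u ∧ u ≤ s then ENNReal.ofReal ((t-s)^(γ-1)) * ENNReal.ofReal ((s-u)^(β-1) * η' u)
    else 0 with hG
  have hGmeas : Measurable (Function.uncurry G) := by
    apply Measurable.ite
    · have : {p : ℝ × ℝ | 0 < p.2 ∧ p.2 ≤ p.1}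
          = {p : ℝ × ℝ | 0 < p.2} ∩ {p : ℝ × ℝ | p.2 ≤ p.1} := rfl
      rw [this]
      exact (measurableSet_lt measurable_const measurable_snd).inter
        (measurableSet_le measurable_snd measurable_fst)
    · apply Measurable.mul (f := fun x : ℝ × ℝ => ENNReal.ofReal ((t - x.1) ^ (γ - 1)))
        (g := fun x : ℝ × ℝ => ENNReal.ofReal ((x.1 - x.2) ^ (β - 1) * η' x.2))
      · fun_prop
      · apply Measurable.ennreal_ofReal
        apply Measurable.mul (f := fun x : ℝ × ℝ => (x.1 - x.2) ^ (β - 1)) (g := fun x => η' x.2)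
        · fun_prop
        · exact hη'meas.comp measurable_snd
    · exact measurable_const
  set Jfull : ℝ → ℝ≥0∞ := fun s => ∫⁻ u, G s u with hJfull
  have hJfullmeas : Measurable Jfull := hGmeas.lintegral_prod_right'
  set J0 : ℝ → ℝ≥0∞ := fun s =>
    ∫⁻ u in Set.Ioc 0 s, ENNReal.ofReal ((s-u)^(β-1) * η' u) with hJ0
  have hJfull_eq : ∀ s : ℝ, Jfull s = ENNReal.ofReal ((t-s)^(γ-1)) * J0 s := by
    intro s
    have h1 : (fun u => G s u) = (Set.Ioc 0 s).indicator
        (fun u => ENNReal.ofReal ((t-s)^(γ-1)) * ENNReal.ofReal ((s-u)^(β-1) * η' u)) := by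
      ext u
      simp [hG, Set.indicator_apply, Set.mem_Ioc]
    rw [hJfull]
    simp only
    rw [h1, lintegral_indicator measurableSet_Ioc, hJ0]
    simp only
    exact lintegral_const_mul' _ _ ENNReal.ofReal_ne_top
  -- measurability bits
  have hkmeas : Measurable fun s : ℝ => ENNReal.ofReal ((t-s)^(γ-1)) := by fun_prop
  have hameas : AEMeasurable (fun s => ENNReal.ofReal (a s)) (volume.restrict (Ioc 0 t)) :=
    haint.aestronglyMeasurable.aemeasurable.ennreal_ofReal
  -- Step 1
  have step1 : (∫⁻ s in Set.Ioc 0 t, ENNReal.ofReal ((t-s)^(γ-1) * η s))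
      ≤ (∫⁻ s in Set.Ioc 0 t, ENNReal.ofReal ((t-s)^(γ-1)) * ENNReal.ofReal (a s))
        + ENNReal.ofReal b * ∫⁻ s in Set.Ioc 0 t, Jfull s := by
    have hmono : (∫⁻ s in Set.Ioc 0 t, ENNReal.ofReal ((t-s)^(γ-1) * η s))
        ≤ ∫⁻ s in Set.Ioc 0 t, (ENNReal.ofReal ((t-s)^(γ-1)) * ENNReal.ofReal (a s)
            + ENNReal.ofReal b * Jfull s) := by
      apply setLIntegral_mono_ae
      · exact (hkmeas.aemeasurable.mul hameas).add
          (aemeasurable_const.mul hJfullmeas.aemeasurable)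
      · refine Filter.Eventually.of_forall fun s hs => ?_
        have hsT : s < T := lt_of_le_of_lt hs.2 htT
        have hts : (0:ℝ) ≤ t - s := by linarith [hs.2]
        have hk0 : (0:ℝ) ≤ (t-s)^(γ-1) := Real.rpow_nonneg hts _
        rw [ENNReal.ofReal_mul hk0, hJfull_eq s]
        have hη_le : ENNReal.ofReal (η s)
            ≤ ENNReal.ofReal (a s) + ENNReal.ofReal b * J0 s := by
          refine le_trans (ENNReal.ofReal_le_ofReal (hineq s hs.1.le hsT)) ?_
          refine le_trans ENNReal.ofReal_add_le ?_
          apply add_le_add_right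
          rw [ENNReal.ofReal_mul hb.le]
          apply mul_le_mul_right
          rw [intervalIntegral.integral_of_le hs.1.le]
          by_cases hI : IntegrableOn (fun u => (s-u)^(β-1) * η u) (Set.Ioc 0 s) volume
          · rw [ofReal_integral_eq_lintegral_ofReal hI ?_]
            · apply lintegral_mono_ae
              have hae : ∀ᵐ u ∂(volume.restrict (Set.Ioc 0 s)), η u = η' u :=
                ae_restrict_of_ae_restrict_of_subset (Set.Ioc_subset_Ioc_right hs.2) hη'ae
              filter_upwards [hae] with u h1
              rw [h1]
            · filter_upwards [self_mem_ae_restrict (measurableSet_Ioc :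
                MeasurableSet (Set.Ioc (0:ℝ) s))] with u hu
              exact mul_nonneg (Real.rpow_nonneg (by linarith [hu.2]) _)
                (hη0 u hu.1.le (by linarith [hu.2, hs.2]))
          · rw [integral_undef hI]
            simp
        calc ENNReal.ofReal ((t-s)^(γ-1)) * ENNReal.ofReal (η s)
            ≤ ENNReal.ofReal ((t-s)^(γ-1)) * (ENNReal.ofReal (a s) + ENNReal.ofReal b * J0 s) :=
              mul_le_mul_right hη_le _
          _ = _ := by ring
    refine hmono.trans (le_of_eq ?_)
    rw [lintegral_add_left' (f := fun s => ENNReal.ofReal ((t-s)^(γ-1)) * ENNReal.ofReal (a s))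
      (hkmeas.aemeasurable.mul hameas)]
    congr 1
    exact lintegral_const_mul' _ _ ENNReal.ofReal_ne_top
  -- Step 2 : the `a` term
  have step2 : (∫⁻ s in Set.Ioc 0 t, ENNReal.ofReal ((t-s)^(γ-1)) * ENNReal.ofReal (a s))
      ≤ ENNReal.ofReal (a t * (t^γ/γ)) := by
    have h1 : (∫⁻ s in Set.Ioc 0 t, ENNReal.ofReal ((t-s)^(γ-1)) * ENNReal.ofReal (a s))
        ≤ ∫⁻ s in Set.Ioc 0 t, ENNReal.ofReal (a t) * ENNReal.ofReal ((t-s)^(γ-1)) := by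
      apply setLIntegral_mono_ae (aemeasurable_const.mul hkmeas.aemeasurable)
      refine Filter.Eventually.of_forall fun s hs => ?_
      rw [mul_comm]
      exact mul_le_mul_left (ENNReal.ofReal_le_ofReal (hamono s t hs.1.le hs.2 htT)) _
    refine h1.trans (le_of_eq ?_)
    rw [lintegral_const_mul' _ _ ENNReal.ofReal_ne_top]
    have h2 : (∫⁻ s in Set.Ioc 0 t, ENNReal.ofReal ((t-s)^(γ-1)))
        = ENNReal.ofReal (t^γ/γ) := by
      rw [← ofReal_integral_eq_lintegral_ofReal]
      · rw [← intervalIntegral.integral_of_le ht0.le, fg_kernel_integral hγ]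
      · exact (intervalIntegrable_iff_integrableOn_Ioc_of_le ht0.le).mp (fg_kernel_integrable hγ)
      · filter_upwards [self_mem_ae_restrict (measurableSet_Ioc :
          MeasurableSet (Set.Ioc (0:ℝ) t))] with s hs
        exact Real.rpow_nonneg (by linarith [hs.2]) _
    rw [h2, ← ENNReal.ofReal_mul (ha0 t ht0.le htT)]
  -- Step 3 : Fubini for the double term
  have step3 : (∫⁻ s in Set.Ioc 0 t, Jfull s)
      ≤ ENNReal.ofReal Bc * ∫⁻ u in Set.Ioc 0 t, ENNReal.ofReal ((t-u)^(γ+β-1) * η u) := by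
    have hne : ∀ᵐ (u:ℝ) ∂(volume : Measure ℝ), u ≠ t := by
      have hset : {u : ℝ | ¬ u ≠ t} = {t} := by ext u; simp
      rw [ae_iff, hset]
      exact measure_singleton t
    -- rewrite Jfull as an integral over Ioc 0 t
    have h1 : (∫⁻ s in Set.Ioc 0 t, Jfull s)
        = ∫⁻ s in Set.Ioc 0 t, ∫⁻ u in Set.Ioc 0 t, G s u := by
      refine setLIntegral_congr_fun measurableSet_Ioc
        (fun s hs => ?_)
      rw [hJfull]
      simp only
      rw [← lintegral_indicator (measurableSet_Ioc : MeasurableSet (Set.Ioc (0:ℝ) t))]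
      congr 1
      ext u
      rw [Set.indicator_apply]
      by_cases hu : u ∈ Set.Ioc 0 t
      · rw [if_pos hu]
      · rw [if_neg hu, hG]
        simp only
        rw [if_neg]
        rintro ⟨h0, hle⟩
        exact hu ⟨h0, le_trans hle hs.2⟩
    rw [h1, lintegral_lintegral_swap hGmeas.aemeasurable]
    have h2 : (∫⁻ u in Set.Ioc 0 t, ∫⁻ s in Set.Ioc 0 t, G s u)
        = ∫⁻ u in Set.Ioc 0 t, ENNReal.ofReal Bc * ENNReal.ofReal ((t-u)^(γ+β-1) * η' u) := by
      refine setLIntegral_congr_fun_ae measurableSet_Ioc ?_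
      filter_upwards [hne] with u hut hu
      have h0u : 0 < u := hu.1
      have hutlt : u < t := lt_of_le_of_ne hu.2 hut
      -- inner integral over s
      have h3 : (fun s => G s u) = (Set.Ici u).indicator
          (fun s => ENNReal.ofReal ((t-s)^(γ-1)) * ENNReal.ofReal ((s-u)^(β-1) * η' u)) := by
        ext s
        rw [Set.indicator_apply, hG]
        simp only [Set.mem_Ici]
        by_cases hsu : u ≤ s
        · rw [if_pos hsu, if_pos ⟨h0u, hsu⟩]
        · rw [if_neg hsu, if_neg (fun h => hsu h.2)]
      rw [h3, setLIntegral_indicator measurableSet_Ici]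
      have h4 : Set.Ici u ∩ Set.Ioc 0 t = Set.Icc u t := by
        ext s
        simp only [Set.mem_inter_iff, Set.mem_Ici, Set.mem_Ioc, Set.mem_Icc]
        constructor
        · rintro ⟨hus, _, hst⟩; exact ⟨hus, hst⟩
        · rintro ⟨hus, hst⟩; exact ⟨hus, lt_of_lt_of_le h0u hus, hst⟩
      rw [h4, setLIntegral_congr (Ioc_ae_eq_Icc (α := ℝ) (a := u) (b := t)).symm]
      have h5 : (∫⁻ s in Set.Ioc u t, ENNReal.ofReal ((t-s)^(γ-1))
            * ENNReal.ofReal ((s-u)^(β-1) * η' u))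
          = ∫⁻ s in Set.Ioc u t, ENNReal.ofReal ((t-s)^(γ-1) * (s-u)^(β-1))
            * ENNReal.ofReal (η' u) := by
        refine setLIntegral_congr_fun measurableSet_Ioc
          (fun s hs => ?_)
        rw [ENNReal.ofReal_mul (Real.rpow_nonneg (by linarith [hs.1] : (0:ℝ) ≤ s - u) _),
          ENNReal.ofReal_mul (Real.rpow_nonneg (by linarith [hs.2] : (0:ℝ) ≤ t - s) _),
          mul_assoc]
      rw [h5, lintegral_mul_const' _ _ ENNReal.ofReal_ne_top]
      have h6 : (∫⁻ s in Set.Ioc u t, ENNReal.ofReal ((t-s)^(γ-1) * (s-u)^(β-1)))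
          = ENNReal.ofReal (Bc * (t-u)^(γ+β-1)) := by
        rw [← ofReal_integral_eq_lintegral_ofReal]
        · rw [← intervalIntegral.integral_of_le hutlt.le, fg_rbeta_integral hγ hβ0 hutlt, hBc]
        · exact (intervalIntegrable_iff_integrableOn_Ioc_of_le hutlt.le).mp
            (fg_rbeta_kernel_integrable hγ hβ0 hutlt)
        · filter_upwards [self_mem_ae_restrict (measurableSet_Ioc :
            MeasurableSet (Set.Ioc u t))] with s hs
          exact mul_nonneg (Real.rpow_nonneg (by linarith [hs.2]) _)
            (Real.rpow_nonneg (by linarith [hs.1]) _)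
      rw [h6, ENNReal.ofReal_mul hBc0, mul_assoc,
        ← ENNReal.ofReal_mul (Real.rpow_nonneg (by linarith : (0:ℝ) ≤ t - u) _)]
    rw [h2, lintegral_const_mul' _ _ ENNReal.ofReal_ne_top]
    apply mul_le_mul_right
    apply le_of_eq
    refine lintegral_congr_ae ?_
    filter_upwards [hη'ae] with u h
    rw [h]
  calc (∫⁻ s in Set.Ioc 0 t, ENNReal.ofReal ((t-s)^(γ-1) * η s))
      ≤ (∫⁻ s in Set.Ioc 0 t, ENNReal.ofReal ((t-s)^(γ-1)) * ENNReal.ofReal (a s))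
        + ENNReal.ofReal b * ∫⁻ s in Set.Ioc 0 t, Jfull s := step1
    _ ≤ ENNReal.ofReal (a t * (t^γ/γ)) + ENNReal.ofReal b
          * (ENNReal.ofReal Bc * ∫⁻ u in Set.Ioc 0 t, ENNReal.ofReal ((t-u)^(γ+β-1) * η u)) :=
        add_le_add step2 (mul_le_mul_right step3 _)
    _ = _ := by rw [ENNReal.ofReal_mul hb.le, mul_assoc]

end FracGronwallAux

/-- The Mittag-Leffler function `E_β(z) = Σ_{k≥0} z^k/Γ(βk+1)`. -/
noncomputable def mittagLeffler (β z : ℝ) : ℝ :=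
  ∑' k : ℕ, z ^ k / Real.Gamma (β * k + 1)

/-- Fractional Gronwall lemma: if `η(t) ≤ a(t) + b ∫₀ᵗ (t-s)^{β-1} η(s) ds` on `[0,T)`,
with `a` nonnegative nondecreasing locally integrable and `η` nonnegative locally
integrable, then `η(t) ≤ a(t) E_β(b Γ(β) t^β)`. -/
theorem fractional_gronwall (T β b : ℝ) (hT : 0 < T) (hβ : β ∈ Set.Ioo (0:ℝ) 1)
    (hb : 0 < b) (a η : ℝ → ℝ)
    (ha0 : ∀ t, 0 ≤ t → t < T → 0 ≤ a t)
    (hamono : ∀ s t, 0 ≤ s → s ≤ t → t < T → a s ≤ a t)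
    (haint : ∀ t, 0 ≤ t → t < T → IntervalIntegrable a volume 0 t)
    (hη0 : ∀ t, 0 ≤ t → t < T → 0 ≤ η t)
    (hηint : ∀ t, 0 ≤ t → t < T → IntervalIntegrable η volume 0 t)
    (hineq : ∀ t, 0 ≤ t → t < T →
      η t ≤ a t + b * ∫ s in (0:ℝ)..t, (t - s) ^ (β - 1) * η s)
    (t : ℝ) (ht0 : 0 ≤ t) (htT : t < T) :
    η t ≤ a t * mittagLeffler β (b * Real.Gamma β * t ^ β) := by
  obtain ⟨hβ0, hβ1⟩ := hβ
  have hΓβ : 0 < Real.Gamma β := Real.Gamma_pos_of_pos hβ0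
  rcases eq_or_lt_of_le ht0 with h0 | ht0'
  · -- t = 0
    subst h0
    have h := hineq 0 le_rfl hT
    rw [intervalIntegral.integral_same, mul_zero, add_zero] at h
    have hz : b * Real.Gamma β * (0:ℝ)^β = 0 := by
      rw [Real.zero_rpow hβ0.ne', mul_zero]
    rw [hz]
    have hml : mittagLeffler β 0 = 1 := by
      rw [mittagLeffler, tsum_eq_single 0]
      · norm_num [Real.Gamma_one]
      · intro k hk
        rw [zero_pow hk, zero_div]
    rw [hml, mul_one]
    exact h
  · -- 0 < t
    set z := b * Real.Gamma β * t ^ β with hzdef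
    have hz0 : 0 ≤ z := by positivity
    have hsum : Summable (fun k : ℕ => z ^ k / Real.Gamma (β * k + 1)) :=
      fg_ml_summable hβ0 hz0
    have hterm0 : ∀ k : ℕ, 0 ≤ z ^ k / Real.Gamma (β * k + 1) := fun k =>
      div_nonneg (pow_nonneg hz0 k) (Real.Gamma_pos_of_pos (by positivity)).le
    have hηI : IntegrableOn η (Set.Ioc 0 t) volume :=
      (intervalIntegrable_iff_integrableOn_Ioc_of_le ht0'.le).mp (hηint t ht0 htT)
    set η2 := hηI.aestronglyMeasurable.mk η with hη2def
    have hη2meas : Measurable η2 :=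
      hηI.aestronglyMeasurable.stronglyMeasurable_mk.measurable
    have hη2ae : η =ᵐ[volume.restrict (Set.Ioc 0 t)] η2 :=
      hηI.aestronglyMeasurable.ae_eq_mk
    have haI : IntegrableOn a (Set.Ioc 0 t) volume :=
      (intervalIntegrable_iff_integrableOn_Ioc_of_le ht0'.le).mp (haint t ht0 htT)
    -- the iterated bound
    have main : ∀ n : ℕ, 1 ≤ n →
        ENNReal.ofReal (η t)
          ≤ ENNReal.ofReal (a t * ∑ k ∈ Finset.range n, z ^ k / Real.Gamma (β * k + 1))
            + ENNReal.ofReal ((b * Real.Gamma β) ^ n / Real.Gamma (β * n))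
              * ∫⁻ s in Set.Ioc 0 t, ENNReal.ofReal ((t - s) ^ (β * n - 1) * η s) := by
      intro n hn
      induction n, hn using Nat.le_induction with
      | base =>
        have h := hineq t ht0 htT
        have e1 : a t * ∑ k ∈ Finset.range 1, z ^ k / Real.Gamma (β * k + 1) = a t := by
          simp [Real.Gamma_one]
        have e2 : (b * Real.Gamma β) ^ 1 / Real.Gamma (β * (1:ℕ)) = b := by
          rw [pow_one, Nat.cast_one, mul_one, mul_div_assoc, div_self hΓβ.ne', mul_one]
        rw [e1, e2]
        simp only [Nat.cast_one, mul_one]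
        calc ENNReal.ofReal (η t)
            ≤ ENNReal.ofReal (a t + b * ∫ s in (0:ℝ)..t, (t - s) ^ (β - 1) * η s) :=
              ENNReal.ofReal_le_ofReal h
          _ ≤ ENNReal.ofReal (a t)
              + ENNReal.ofReal (b * ∫ s in (0:ℝ)..t, (t - s) ^ (β - 1) * η s) :=
              ENNReal.ofReal_add_le
          _ ≤ ENNReal.ofReal (a t)
              + ENNReal.ofReal b * ∫⁻ s in Set.Ioc 0 t,
                  ENNReal.ofReal ((t - s) ^ (β - 1) * η s) := by
              apply add_le_add_right
              rw [ENNReal.ofReal_mul hb.le]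
              apply mul_le_mul_right
              rw [intervalIntegral.integral_of_le ht0]
              by_cases hI : IntegrableOn (fun s => (t - s) ^ (β - 1) * η s)
                (Set.Ioc 0 t) volume
              · rw [ofReal_integral_eq_lintegral_ofReal hI ?_]
                filter_upwards [self_mem_ae_restrict (measurableSet_Ioc :
                  MeasurableSet (Set.Ioc (0:ℝ) t))] with s hs
                exact mul_nonneg (Real.rpow_nonneg (by linarith [hs.2]) _)
                  (hη0 s hs.1.le (lt_of_le_of_lt hs.2 htT))
              · rw [integral_undef hI]
                simp
      | succ n hn ih =>
        have hn1 : (1:ℝ) ≤ (n:ℝ) := by exact_mod_cast hn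
        have hγpos : 0 < β * (n:ℝ) := by positivity
        have hΓnβ : 0 < Real.Gamma (β * n) := Real.Gamma_pos_of_pos hγpos
        have hΓnβ1 : 0 < Real.Gamma (β * n + β) := Real.Gamma_pos_of_pos (by positivity)
        have hkey := fg_key (T := T) hβ0 hb ht0' htT hγpos a η η2 hη2meas hη2ae
          ha0 hamono haI hη0 hineq
        have hcast : β * ((n:ℕ)+1 : ℕ) = β * n + β := by push_cast; ring
        have htnβ : t ^ (β * (n:ℝ)) = (t ^ β) ^ n := by
          rw [Real.rpow_mul ht0, Real.rpow_natCast]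
        have hΓadd : Real.Gamma (β * n + 1) = (β * n) * Real.Gamma (β * n) :=
          Real.Gamma_add_one hγpos.ne'
        have arith1 : ((b * Real.Gamma β) ^ n / Real.Gamma (β * n))
              * (a t * (t ^ (β * (n:ℝ)) / (β * n)))
            = a t * (z ^ n / Real.Gamma (β * n + 1)) := by
          rw [hΓadd, htnβ, hzdef, mul_pow]
          field_simp
          ring
        have arith2 : ((b * Real.Gamma β) ^ n / Real.Gamma (β * n))
              * (b * (Real.Gamma (β * n) * Real.Gamma β / Real.Gamma (β * n + β)))
            = (b * Real.Gamma β) ^ (n+1) / Real.Gamma (β * n + β) := by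
          field_simp
          ring
        have hcoef0 : (0:ℝ) ≤ (b * Real.Gamma β) ^ n / Real.Gamma (β * n) := by positivity
        calc ENNReal.ofReal (η t)
            ≤ ENNReal.ofReal (a t * ∑ k ∈ Finset.range n, z ^ k / Real.Gamma (β * k + 1))
              + ENNReal.ofReal ((b * Real.Gamma β) ^ n / Real.Gamma (β * n))
                * ∫⁻ s in Set.Ioc 0 t, ENNReal.ofReal ((t - s) ^ (β * n - 1) * η s) := ih
          _ ≤ ENNReal.ofReal (a t * ∑ k ∈ Finset.range n, z ^ k / Real.Gamma (β * k + 1))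
              + ENNReal.ofReal ((b * Real.Gamma β) ^ n / Real.Gamma (β * n))
                * (ENNReal.ofReal (a t * (t ^ (β * (n:ℝ)) / (β * n)))
                  + ENNReal.ofReal (b * (Real.Gamma (β * n) * Real.Gamma β
                      / Real.Gamma (β * n + β)))
                    * ∫⁻ u in Set.Ioc 0 t,
                        ENNReal.ofReal ((t - u) ^ (β * n + β - 1) * η u)) :=
              add_le_add_right (mul_le_mul_right hkey _) _
          _ = ENNReal.ofReal (a t * ∑ k ∈ Finset.range n, z ^ k / Real.Gamma (β * k + 1))
              + (ENNReal.ofReal (a t * (z ^ n / Real.Gamma (β * n + 1)))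
                + ENNReal.ofReal ((b * Real.Gamma β) ^ (n+1) / Real.Gamma (β * n + β))
                  * ∫⁻ u in Set.Ioc 0 t,
                      ENNReal.ofReal ((t - u) ^ (β * n + β - 1) * η u)) := by
              rw [mul_add, ← ENNReal.ofReal_mul hcoef0, arith1, ← mul_assoc,
                ← ENNReal.ofReal_mul hcoef0, arith2]
          _ = _ := by
              rw [← add_assoc, ← ENNReal.ofReal_add (mul_nonneg (ha0 t ht0 htT)
                  (Finset.sum_nonneg fun k _ => hterm0 k))
                  (mul_nonneg (ha0 t ht0 htT) (hterm0 n)),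
                ← mul_add, ← Finset.sum_range_succ, hcast]
    -- remainder bound
    set M : ℝ := ∫ s in (0:ℝ)..t, η s with hMdef
    have hM0 : 0 ≤ M := intervalIntegral.integral_nonneg ht0
      (fun s hs => hη0 s hs.1 (lt_of_le_of_lt hs.2 htT))
    have Lbound : ∀ n : ℕ, 1 ≤ β * (n:ℝ) →
        (∫⁻ s in Set.Ioc 0 t, ENNReal.ofReal ((t - s) ^ (β * n - 1) * η s))
          ≤ ENNReal.ofReal (t ^ (β * (n:ℝ) - 1) * M) := by
      intro n h1
      have hstep : (∫⁻ s in Set.Ioc 0 t, ENNReal.ofReal ((t - s) ^ (β * n - 1) * η s))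
          ≤ ∫⁻ s in Set.Ioc 0 t, ENNReal.ofReal (t ^ (β * (n:ℝ) - 1) * η s) := by
        apply setLIntegral_mono_ae
        · exact (aemeasurable_const.mul
            hηI.aestronglyMeasurable.aemeasurable).ennreal_ofReal
        · refine Filter.Eventually.of_forall fun s hs => ?_
          apply ENNReal.ofReal_le_ofReal
          apply mul_le_mul_of_nonneg_right
          · exact Real.rpow_le_rpow (by linarith [hs.2]) (by linarith [hs.1])
              (by linarith)
          · exact hη0 s hs.1.le (lt_of_le_of_lt hs.2 htT)
      refine hstep.trans (le_of_eq ?_)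
      rw [← ofReal_integral_eq_lintegral_ofReal (hηI.const_mul _) ?_]
      · rw [MeasureTheory.integral_const_mul, hMdef, intervalIntegral.integral_of_le ht0]
      · filter_upwards [self_mem_ae_restrict (measurableSet_Ioc :
          MeasurableSet (Set.Ioc (0:ℝ) t))] with s hs
        exact mul_nonneg (Real.rpow_nonneg ht0 _)
          (hη0 s hs.1.le (lt_of_le_of_lt hs.2 htT))
    -- the remainder tends to zero
    have tend : Filter.Tendsto (fun n : ℕ =>
        (b * Real.Gamma β) ^ n / Real.Gamma (β * n) * (t ^ (β * (n:ℝ) - 1) * M))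
        Filter.atTop (nhds 0) := by
      have teq : ∀ n : ℕ, 1 ≤ n →
          (β * M / t) * ((n:ℝ) * (z ^ n / Real.Gamma (β * n + 1)))
            = (b * Real.Gamma β) ^ n / Real.Gamma (β * n) * (t ^ (β * (n:ℝ) - 1) * M) := by
        intro n hn
        have hγpos : 0 < β * (n:ℝ) := by
          have : (1:ℝ) ≤ (n:ℝ) := by exact_mod_cast hn
          positivity
        have hΓnβ : 0 < Real.Gamma (β * n) := Real.Gamma_pos_of_pos hγpos
        have hΓadd : Real.Gamma (β * n + 1) = (β * n) * Real.Gamma (β * n) :=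
          Real.Gamma_add_one hγpos.ne'
        have htnβ : t ^ (β * (n:ℝ) - 1) = (t ^ β) ^ n / t := by
          rw [Real.rpow_sub ht0', Real.rpow_one, Real.rpow_mul ht0, Real.rpow_natCast]
        rw [hΓadd, htnβ, hzdef, mul_pow]
        field_simp
      have hml2 := (fg_ml_mul_tendsto hβ0 hz0).const_mul (β * M / t)
      rw [mul_zero] at hml2
      refine hml2.congr' ?_
      filter_upwards [Filter.eventually_ge_atTop 1] with n hn
      exact teq n hn
    -- conclude via epsilon
    have hML0 : 0 ≤ mittagLeffler β z := tsum_nonneg hterm0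
    refine le_of_forall_pos_le_add fun ε hε => ?_
    have hev1 : ∀ᶠ n : ℕ in Filter.atTop,
        (b * Real.Gamma β) ^ n / Real.Gamma (β * n) * (t ^ (β * (n:ℝ) - 1) * M) < ε :=
      tend.eventually_lt_const hε
    have hev2 : ∀ᶠ n : ℕ in Filter.atTop, 1 ≤ β * (n:ℝ) := by
      have h := Filter.Tendsto.const_mul_atTop hβ0
        (tendsto_natCast_atTop_atTop (R := ℝ))
      exact h.eventually_ge_atTop 1
    have hev3 : ∀ᶠ n : ℕ in Filter.atTop, 1 ≤ n := Filter.eventually_ge_atTop 1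
    obtain ⟨n, hn1, hnβ, hnε⟩ := (hev3.and (hev2.and hev1)).exists
    have h1 := main n hn1
    have h2 : ENNReal.ofReal ((b * Real.Gamma β) ^ n / Real.Gamma (β * n))
          * (∫⁻ s in Set.Ioc 0 t, ENNReal.ofReal ((t - s) ^ (β * n - 1) * η s))
        ≤ ENNReal.ofReal ((b * Real.Gamma β) ^ n / Real.Gamma (β * n)
            * (t ^ (β * (n:ℝ) - 1) * M)) := by
      calc _ ≤ ENNReal.ofReal ((b * Real.Gamma β) ^ n / Real.Gamma (β * n))
            * ENNReal.ofReal (t ^ (β * (n:ℝ) - 1) * M) :=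
          mul_le_mul_right (Lbound n hnβ) _
        _ = _ := (ENNReal.ofReal_mul (by positivity)).symm
    have h3 : ENNReal.ofReal (a t * ∑ k ∈ Finset.range n, z ^ k / Real.Gamma (β * k + 1))
        ≤ ENNReal.ofReal (a t * mittagLeffler β z) := by
      apply ENNReal.ofReal_le_ofReal
      apply mul_le_mul_of_nonneg_left _ (ha0 t ht0 htT)
      exact hsum.sum_le_tsum _ (fun i _ => hterm0 i)
    have h4 : ENNReal.ofReal (η t) ≤ ENNReal.ofReal (a t * mittagLeffler β z + ε) := by
      calc ENNReal.ofReal (η t) ≤ _ := h1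
        _ ≤ ENNReal.ofReal (a t * mittagLeffler β z)
            + ENNReal.ofReal ((b * Real.Gamma β) ^ n / Real.Gamma (β * n)
                * (t ^ (β * (n:ℝ) - 1) * M)) := add_le_add h3 h2
        _ ≤ ENNReal.ofReal (a t * mittagLeffler β z) + ENNReal.ofReal ε :=
            add_le_add_right (ENNReal.ofReal_le_ofReal hnε.le) _
        _ = ENNReal.ofReal (a t * mittagLeffler β z + ε) :=
            (ENNReal.ofReal_add (mul_nonneg (ha0 t ht0 htT) hML0) hε.le).symm
    exact (ENNReal.ofReal_le_ofReal_iff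
      (add_nonneg (mul_nonneg (ha0 t ht0 htT) hML0) hε.le)).1 h4
end
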